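/- Let B ∈ ℂ^{m×n}, W ∈ ℂ^{n×m}, let k be a natural number with k = ind(BW), let X be a minimal rank W-weighted weak Drazin inverse of B, and let E ∈ ℂ^{m×n} with col(E·W) ⊆ col((B·W)^k) and col((E·W)^*) ⊆ col((X·W·B·W)^*). Assume the matrices I + W·E·W·X ∈ ℂ^{n×n} and I + X·W·E·W ∈ ℂ^{m×m} are invertible (in the paper this is guaranteed by ‖W·E·W·X‖ < 1), and set 𝔇 = B + E. Then X·(I + W·E·W·X)⁻¹ is a minimal rank W-weighted weak Drazin inverse of 𝔇, i.e. X·(I + W·E·W·X)⁻¹·W·(𝔇·W)^{k+1} = (𝔇·W)^k and rank(X·(I + W·E·W·X)⁻¹) = rank((𝔇·W)^k). Moreover X·(I + W·E·W·X)⁻¹·W·𝔇·W = X·W·B·W and W·𝔇·W·(I + X·W·E·W)⁻¹·X = W·B·W·X. -/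
import Mathlib


open Matrix

/-- The index of a square complex matrix: the least `j` with `rank (M^j) = rank (M^(j+1))`. -/
noncomputable def matIndex {p : ℕ} (M : Matrix (Fin p) (Fin p) ℂ) : ℕ :=
  sInf {j : ℕ | (M ^ j).rank = (M ^ (j + 1)).rank}

/-- The column space of a complex matrix: the range of `v ↦ M *ᵥ v`. -/
noncomputable def colSpace {a b : ℕ} (M : Matrix (Fin a) (Fin b) ℂ) :
    Submodule ℂ (Fin a → ℂ) :=
  LinearMap.range M.mulVecLin

/-- The null space of a complex matrix: the kernel of `v ↦ M *ᵥ v`. -/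
noncomputable def nullSpace {a b : ℕ} (M : Matrix (Fin a) (Fin b) ℂ) :
    Submodule ℂ (Fin b → ℂ) :=
  LinearMap.ker M.mulVecLin

/-- If the column space of `M` is contained in that of `N`, then `M` factors as `N * C`. -/
lemma exists_mul_factor {a b c : ℕ} {M : Matrix (Fin a) (Fin b) ℂ}
    {N : Matrix (Fin a) (Fin c) ℂ} (h : colSpace M ≤ colSpace N) :
    ∃ C : Matrix (Fin c) (Fin b) ℂ, M = N * C := by
  have hmem : ∀ j : Fin b, ∃ v : Fin c → ℂ, N *ᵥ v = M *ᵥ Pi.single j 1 := by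
    intro j
    have : M.mulVecLin (Pi.single j 1) ∈ colSpace N :=
      h (LinearMap.mem_range_self M.mulVecLin (Pi.single j 1))
    obtain ⟨v, hv⟩ := this
    exact ⟨v, hv⟩
  choose f hf using hmem
  refine ⟨Matrix.of fun i j => f j i, ?_⟩
  ext i j
  have h1 : (N * Matrix.of fun i j => f j i) i j = (N *ᵥ f j) i := by
    simp [Matrix.mul_apply, Matrix.mulVec, dotProduct]
  rw [h1, hf j]
  simp [Matrix.mulVec_single]

lemma colSpace_mul_le {a b c : ℕ} (M : Matrix (Fin a) (Fin b) ℂ)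
    (N : Matrix (Fin b) (Fin c) ℂ) : colSpace (M * N) ≤ colSpace M := by
  rw [colSpace, colSpace, Matrix.mulVecLin_mul]
  exact LinearMap.range_comp_le_range _ _

lemma colSpace_eq_of_le_of_rank_le {a b c : ℕ} (M : Matrix (Fin a) (Fin b) ℂ)
    (N : Matrix (Fin a) (Fin c) ℂ) (h : colSpace M ≤ colSpace N)
    (hr : N.rank ≤ M.rank) : colSpace M = colSpace N :=
  Submodule.eq_of_le_of_finrank_le h hr

lemma exists_rank_pow_stable {p : ℕ} (M : Matrix (Fin p) (Fin p) ℂ) :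
    ∃ j, (M ^ j).rank = (M ^ (j + 1)).rank := by
  by_contra h
  push_neg at h
  have hlt : ∀ j, (M ^ (j + 1)).rank < (M ^ j).rank := by
    intro j
    refine lt_of_le_of_ne ?_ (fun hh => h j hh.symm)
    rw [pow_succ]
    exact Matrix.rank_mul_le_left _ _
  have hbound : ∀ j, (M ^ j).rank + j ≤ (M ^ 0).rank := by
    intro j
    induction j with
    | zero => simp
    | succ i ih =>
      have := hlt i
      omega
  have := hbound ((M ^ 0).rank + 1)
  omega

set_option maxHeartbeats 2000000

/-- **Theorem 3.17.** Perturbation of the minimal rank W-weighted weak Drazin inverse. -/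
theorem weighted_weak_Drazin_perturbation {m n : ℕ}
    (B : Matrix (Fin m) (Fin n) ℂ) (W : Matrix (Fin n) (Fin m) ℂ)
    (k : ℕ) (hk : k = matIndex (B * W))
    (X : Matrix (Fin m) (Fin n) ℂ)
    (hX1 : X * W * (B * W) ^ (k + 1) = (B * W) ^ k)
    (hX2 : X.rank = ((B * W) ^ k).rank)
    (E : Matrix (Fin m) (Fin n) ℂ)
    (hE1 : colSpace (E * W) ≤ colSpace ((B * W) ^ k))
    (hE2 : colSpace (E * W)ᴴ ≤ colSpace (X * W * B * W)ᴴ)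
    (hu1 : IsUnit (1 + W * E * W * X))
    (hu2 : IsUnit (1 + X * W * E * W))
    (𝔇 : Matrix (Fin m) (Fin n) ℂ) (h𝔇 : 𝔇 = B + E) :
    X * (1 + W * E * W * X)⁻¹ * W * (𝔇 * W) ^ (k + 1) = (𝔇 * W) ^ k ∧
    (X * (1 + W * E * W * X)⁻¹).rank = ((𝔇 * W) ^ k).rank ∧
    X * (1 + W * E * W * X)⁻¹ * W * 𝔇 * W = X * W * B * W ∧
    W * 𝔇 * W * (1 + X * W * E * W)⁻¹ * X = W * B * W * X := by
  -- units
  have hUdet : IsUnit (1 + W * E * W * X).det := (Matrix.isUnit_iff_isUnit_det _).mp hu1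
  have hVdet : IsUnit (1 + X * W * E * W).det := (Matrix.isUnit_iff_isUnit_det _).mp hu2
  have hUU : (1 + W * E * W * X) * (1 + W * E * W * X)⁻¹ = 1 := Matrix.mul_nonsing_inv _ hUdet
  have hVV' : (1 + X * W * E * W)⁻¹ * (1 + X * W * E * W) = 1 := Matrix.nonsing_inv_mul _ hVdet
  -- swap identity
  have hswap : X * (1 + W * E * W * X) = (1 + X * W * E * W) * X := by
    simp only [Matrix.mul_add, Matrix.add_mul, Matrix.mul_one, Matrix.one_mul, Matrix.mul_assoc]
  have h1 : (1 + X * W * E * W)⁻¹ * (X * (1 + W * E * W * X)) * (1 + W * E * W * X)⁻¹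
      = (1 + X * W * E * W)⁻¹ * ((1 + X * W * E * W) * X) * (1 + W * E * W * X)⁻¹ := by
    rw [hswap]
  have h2 : (1 + X * W * E * W)⁻¹ * (X * (1 + W * E * W * X)) * (1 + W * E * W * X)⁻¹
      = (1 + X * W * E * W)⁻¹ * X := by
    calc (1 + X * W * E * W)⁻¹ * (X * (1 + W * E * W * X)) * (1 + W * E * W * X)⁻¹
        = (1 + X * W * E * W)⁻¹ * (X * ((1 + W * E * W * X) * (1 + W * E * W * X)⁻¹)) := by
          simp only [Matrix.mul_assoc]
      _ = (1 + X * W * E * W)⁻¹ * X := by rw [hUU, Matrix.mul_one]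
  have h3 : (1 + X * W * E * W)⁻¹ * ((1 + X * W * E * W) * X) * (1 + W * E * W * X)⁻¹
      = X * (1 + W * E * W * X)⁻¹ := by
    calc (1 + X * W * E * W)⁻¹ * ((1 + X * W * E * W) * X) * (1 + W * E * W * X)⁻¹
        = ((1 + X * W * E * W)⁻¹ * (1 + X * W * E * W)) * (X * (1 + W * E * W * X)⁻¹) := by
          simp only [Matrix.mul_assoc]
      _ = X * (1 + W * E * W * X)⁻¹ := by rw [hVV', Matrix.one_mul]
  have hXUi : X * (1 + W * E * W * X)⁻¹ = (1 + X * W * E * W)⁻¹ * X :=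
    h3.symm.trans (h1.symm.trans h2)
  -- factorizations
  obtain ⟨C, hC⟩ := exists_mul_factor hE1
  obtain ⟨C', hC'⟩ := exists_mul_factor hE2
  have hR : E * W = C'ᴴ * (X * W * (B * W)) := by
    have h4 := congrArg Matrix.conjTranspose hC'
    simp only [Matrix.conjTranspose_mul, Matrix.conjTranspose_conjTranspose] at h4
    calc E * W = C'ᴴ * (X * W * B * W) := h4
      _ = C'ᴴ * (X * W * (B * W)) := by simp only [Matrix.mul_assoc]
  -- col X = col (B*W)^k
  have hleAX : colSpace ((B * W) ^ k) ≤ colSpace X := by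
    have hfac : (B * W) ^ k = X * (W * (B * W) ^ (k + 1)) := by
      calc (B * W) ^ k = X * W * (B * W) ^ (k + 1) := hX1.symm
        _ = X * (W * (B * W) ^ (k + 1)) := by simp only [Matrix.mul_assoc]
    rw [hfac]
    exact colSpace_mul_le _ _
  have hcolX : colSpace X = colSpace ((B * W) ^ k) :=
    (colSpace_eq_of_le_of_rank_le _ _ hleAX hX2.le).symm
  obtain ⟨T, hT⟩ := exists_mul_factor hcolX.le
  -- index : col (B*W)^k = col (B*W)^(k+1)
  have hrk : ((B * W) ^ k).rank = ((B * W) ^ (k + 1)).rank := by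
    have hmem : k ∈ {j : ℕ | ((B * W) ^ j).rank = ((B * W) ^ (j + 1)).rank} := by
      rw [hk, matIndex]
      exact Nat.sInf_mem (exists_rank_pow_stable (B * W))
    exact hmem
  have hle2 : colSpace ((B * W) ^ (k + 1)) ≤ colSpace ((B * W) ^ k) := by
    rw [pow_succ]
    exact colSpace_mul_le _ _
  have hcolA : colSpace ((B * W) ^ (k + 1)) = colSpace ((B * W) ^ k) :=
    colSpace_eq_of_le_of_rank_le _ _ hle2 hrk.le
  obtain ⟨C₁, hC1⟩ := exists_mul_factor hcolA.ge
  -- core identities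
  have hPA : X * W * (B * W) * (B * W) ^ k = (B * W) ^ k := by
    calc X * W * (B * W) * (B * W) ^ k = X * W * ((B * W) * (B * W) ^ k) := by
          simp only [Matrix.mul_assoc]
      _ = X * W * (B * W) ^ (k + 1) := by rw [← pow_succ']
      _ = (B * W) ^ k := hX1
  have hPAZ : ∀ {c : ℕ} (Z : Matrix (Fin m) (Fin c) ℂ),
      X * W * (B * W) * ((B * W) ^ k * Z) = (B * W) ^ k * Z := by
    intro c Z
    calc X * W * (B * W) * ((B * W) ^ k * Z) = (X * W * (B * W) * (B * W) ^ k) * Z := by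
          simp only [Matrix.mul_assoc]
      _ = (B * W) ^ k * Z := by rw [hPA]
  have hPX : X * W * (B * W) * X = X := by
    nth_rewrite 2 [hT]
    rw [hPAZ]
    exact hT.symm
  have heP : E * W * (X * W * (B * W)) = E * W := by
    rw [hR]
    calc C'ᴴ * (X * W * (B * W)) * (X * W * (B * W))
        = C'ᴴ * ((X * W * (B * W) * X) * (W * (B * W))) := by simp only [Matrix.mul_assoc]
      _ = C'ᴴ * (X * (W * (B * W))) := by rw [hPX]
      _ = C'ᴴ * (X * W * (B * W)) := by simp only [Matrix.mul_assoc]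
  have hYA : B * W * (X * W * (B * W) ^ k) = (B * W) ^ k := by
    conv_lhs => rw [hC1]
    calc B * W * (X * W * ((B * W) ^ (k + 1) * C₁))
        = B * W * ((X * W * (B * W) ^ (k + 1)) * C₁) := by simp only [Matrix.mul_assoc]
      _ = B * W * ((B * W) ^ k * C₁) := by rw [hX1]
      _ = (B * W) * (B * W) ^ k * C₁ := by simp only [Matrix.mul_assoc]
      _ = (B * W) ^ (k + 1) * C₁ := by rw [← pow_succ']
      _ = (B * W) ^ k := hC1.symm
  have hYe : B * W * (X * W * (E * W)) = E * W := by
    rw [hC]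
    calc B * W * (X * W * ((B * W) ^ k * C))
        = (B * W * (X * W * (B * W) ^ k)) * C := by simp only [Matrix.mul_assoc]
      _ = (B * W) ^ k * C := by rw [hYA]
  -- claim 3
  have hXWDW : X * W * (𝔇 * W) = (1 + X * W * E * W) * (X * W * (B * W)) := by
    rw [h𝔇]
    calc X * W * ((B + E) * W) = X * W * (B * W) + X * W * (E * W) := by
          rw [Matrix.add_mul, Matrix.mul_add]
      _ = X * W * (B * W) + X * W * (E * W * (X * W * (B * W))) := by rw [heP]
      _ = (1 + X * W * E * W) * (X * W * (B * W)) := by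
          rw [Matrix.add_mul, Matrix.one_mul]
          simp only [Matrix.mul_assoc]
  have c3 : X * (1 + W * E * W * X)⁻¹ * W * 𝔇 * W = X * W * B * W := by
    calc X * (1 + W * E * W * X)⁻¹ * W * 𝔇 * W
        = (1 + X * W * E * W)⁻¹ * X * W * 𝔇 * W := by rw [hXUi]
      _ = (1 + X * W * E * W)⁻¹ * (X * W * (𝔇 * W)) := by simp only [Matrix.mul_assoc]
      _ = (1 + X * W * E * W)⁻¹ * ((1 + X * W * E * W) * (X * W * (B * W))) := by rw [hXWDW]
      _ = ((1 + X * W * E * W)⁻¹ * (1 + X * W * E * W)) * (X * W * (B * W)) := by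
          simp only [Matrix.mul_assoc]
      _ = X * W * (B * W) := by rw [hVV', Matrix.one_mul]
      _ = X * W * B * W := by simp only [Matrix.mul_assoc]
  -- claim 4
  have hNX : 𝔇 * W * X = B * W * (X * (1 + W * E * W * X)) := by
    rw [h𝔇]
    calc (B + E) * W * X = B * W * X + E * W * X := by simp only [Matrix.add_mul]
      _ = B * W * X + (B * W * (X * W * (E * W))) * X := by rw [hYe]
      _ = B * W * (X * (1 + W * E * W * X)) := by
          simp only [Matrix.mul_add, Matrix.mul_one, Matrix.mul_assoc]
  have c4 : W * 𝔇 * W * (1 + X * W * E * W)⁻¹ * X = W * B * W * X := by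
    calc W * 𝔇 * W * (1 + X * W * E * W)⁻¹ * X
        = W * (𝔇 * W * ((1 + X * W * E * W)⁻¹ * X)) := by simp only [Matrix.mul_assoc]
      _ = W * (𝔇 * W * (X * (1 + W * E * W * X)⁻¹)) := by rw [← hXUi]
      _ = W * ((𝔇 * W * X) * (1 + W * E * W * X)⁻¹) := by simp only [Matrix.mul_assoc]
      _ = W * ((B * W * (X * (1 + W * E * W * X))) * (1 + W * E * W * X)⁻¹) := by rw [hNX]
      _ = W * (B * W * (X * ((1 + W * E * W * X) * (1 + W * E * W * X)⁻¹))) := by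
          simp only [Matrix.mul_assoc]
      _ = W * B * W * X := by
          rw [hUU, Matrix.mul_one]
          simp only [Matrix.mul_assoc]
  -- claim 1
  have hNsplit : ∀ i : ℕ, (𝔇 * W) ^ (i + 1) = B * W * (𝔇 * W) ^ i + E * W * (𝔇 * W) ^ i := by
    intro i
    rw [pow_succ']
    nth_rewrite 1 [h𝔇]
    rw [Matrix.add_mul, Matrix.add_mul]
  have key : ∀ j, j ≤ k →
      X * W * (B * W) * ((B * W) ^ (k - j) * (𝔇 * W) ^ j) = (B * W) ^ (k - j) * (𝔇 * W) ^ j := by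
    intro j
    induction j with
    | zero =>
      intro _
      simp only [Nat.sub_zero, pow_zero, Matrix.mul_one]
      exact hPA
    | succ j ih =>
      intro hj
      have hj' : j ≤ k := Nat.le_of_succ_le hj
      have hsub : k - j = (k - (j + 1)) + 1 := by omega
      have term1 : X * W * (B * W) * ((B * W) ^ (k - (j + 1)) * (B * W * (𝔇 * W) ^ j))
          = (B * W) ^ (k - (j + 1)) * (B * W * (𝔇 * W) ^ j) := by
        have e1 : (B * W) ^ (k - (j + 1)) * (B * W * (𝔇 * W) ^ j)
            = (B * W) ^ (k - j) * (𝔇 * W) ^ j := by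
          rw [hsub, pow_succ]
          simp only [Matrix.mul_assoc]
        rw [e1]
        exact ih hj'
      have term2 : X * W * (B * W) * ((B * W) ^ (k - (j + 1)) * (E * W * (𝔇 * W) ^ j))
          = (B * W) ^ (k - (j + 1)) * (E * W * (𝔇 * W) ^ j) := by
        rw [hC]
        have e2 : (B * W) ^ (k - (j + 1)) * ((B * W) ^ k * C * (𝔇 * W) ^ j)
            = (B * W) ^ k * ((B * W) ^ (k - (j + 1)) * (C * (𝔇 * W) ^ j)) := by
          calc (B * W) ^ (k - (j + 1)) * ((B * W) ^ k * C * (𝔇 * W) ^ j)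
              = ((B * W) ^ (k - (j + 1)) * (B * W) ^ k) * (C * (𝔇 * W) ^ j) := by
                simp only [Matrix.mul_assoc]
            _ = ((B * W) ^ k * (B * W) ^ (k - (j + 1))) * (C * (𝔇 * W) ^ j) := by
                rw [← pow_add, Nat.add_comm (k - (j + 1)) k, pow_add]
            _ = (B * W) ^ k * ((B * W) ^ (k - (j + 1)) * (C * (𝔇 * W) ^ j)) := by
                simp only [Matrix.mul_assoc]
        rw [e2, hPAZ]
      calc X * W * (B * W) * ((B * W) ^ (k - (j + 1)) * (𝔇 * W) ^ (j + 1))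
          = X * W * (B * W) * ((B * W) ^ (k - (j + 1)) * (B * W * (𝔇 * W) ^ j))
            + X * W * (B * W) * ((B * W) ^ (k - (j + 1)) * (E * W * (𝔇 * W) ^ j)) := by
            rw [hNsplit j, Matrix.mul_add, Matrix.mul_add]
        _ = (B * W) ^ (k - (j + 1)) * (B * W * (𝔇 * W) ^ j)
            + (B * W) ^ (k - (j + 1)) * (E * W * (𝔇 * W) ^ j) := by rw [term1, term2]
        _ = (B * W) ^ (k - (j + 1)) * (𝔇 * W) ^ (j + 1) := by
            rw [hNsplit j, Matrix.mul_add]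
  have hPN : X * W * (B * W) * (𝔇 * W) ^ k = (𝔇 * W) ^ k := by
    have hkey := key k le_rfl
    simp only [Nat.sub_self, pow_zero, Matrix.one_mul] at hkey
    exact hkey
  have c1 : X * (1 + W * E * W * X)⁻¹ * W * (𝔇 * W) ^ (k + 1) = (𝔇 * W) ^ k := by
    calc X * (1 + W * E * W * X)⁻¹ * W * (𝔇 * W) ^ (k + 1)
        = (X * (1 + W * E * W * X)⁻¹ * W * 𝔇 * W) * (𝔇 * W) ^ k := by
          rw [pow_succ']
          simp only [Matrix.mul_assoc]
      _ = (X * W * B * W) * (𝔇 * W) ^ k := by rw [c3]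
      _ = X * W * (B * W) * (𝔇 * W) ^ k := by simp only [Matrix.mul_assoc]
      _ = (𝔇 * W) ^ k := hPN
  -- claim 2
  have hUidet : IsUnit ((1 + W * E * W * X)⁻¹).det := Matrix.isUnit_nonsing_inv_det _ hUdet
  have r_le : ((𝔇 * W) ^ k).rank ≤ ((B * W) ^ k).rank := by
    have hfac : (𝔇 * W) ^ k = X * (W * (B * W) * (𝔇 * W) ^ k) := by
      calc (𝔇 * W) ^ k = X * W * (B * W) * (𝔇 * W) ^ k := hPN.symm
        _ = X * (W * (B * W) * (𝔇 * W) ^ k) := by simp only [Matrix.mul_assoc]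
    calc ((𝔇 * W) ^ k).rank = (X * (W * (B * W) * (𝔇 * W) ^ k)).rank := by rw [← hfac]
      _ ≤ X.rank := Matrix.rank_mul_le_left _ _
      _ = ((B * W) ^ k).rank := hX2
  have hNS : 𝔇 * W * (B * W) ^ k = (B * W) ^ k * (B * W + C * (B * W) ^ k) := by
    rw [h𝔇]
    have hcomm : B * W * (B * W) ^ k = (B * W) ^ k * (B * W) := by
      rw [← pow_succ', pow_succ]
    calc (B + E) * W * (B * W) ^ k = B * W * (B * W) ^ k + E * W * (B * W) ^ k := by
          simp only [Matrix.add_mul]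
      _ = (B * W) ^ k * (B * W) + (B * W) ^ k * C * (B * W) ^ k := by rw [hC, hcomm]
      _ = (B * W) ^ k * (B * W) + (B * W) ^ k * (C * (B * W) ^ k) := by
          simp only [Matrix.mul_assoc]
      _ = (B * W) ^ k * (B * W + C * (B * W) ^ k) := by rw [Matrix.mul_add]
  have hNSj : ∀ j : ℕ,
      (𝔇 * W) ^ j * (B * W) ^ k = (B * W) ^ k * (B * W + C * (B * W) ^ k) ^ j := by
    intro j
    induction j with
    | zero => simp
    | succ j ih =>
      calc (𝔇 * W) ^ (j + 1) * (B * W) ^ k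
          = (𝔇 * W) * ((𝔇 * W) ^ j * (B * W) ^ k) := by
            rw [pow_succ']
            simp only [Matrix.mul_assoc]
        _ = (𝔇 * W) * ((B * W) ^ k * (B * W + C * (B * W) ^ k) ^ j) := by rw [ih]
        _ = (𝔇 * W * (B * W) ^ k) * (B * W + C * (B * W) ^ k) ^ j := by
            simp only [Matrix.mul_assoc]
        _ = ((B * W) ^ k * (B * W + C * (B * W) ^ k)) * (B * W + C * (B * W) ^ k) ^ j := by
            rw [hNS]
        _ = (B * W) ^ k * (B * W + C * (B * W) ^ k) ^ (j + 1) := by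
            rw [pow_succ']
            simp only [Matrix.mul_assoc]
  have key2 : ∀ j : ℕ,
      ((1 + X * W * E * W)⁻¹ * (X * W)) ^ j * ((𝔇 * W) ^ j * (B * W) ^ k) = (B * W) ^ k := by
    intro j
    induction j with
    | zero => simp
    | succ j ih =>
      have h1' : (𝔇 * W) ^ (j + 1) * (B * W) ^ k
          = (𝔇 * W * (B * W) ^ k) * (B * W + C * (B * W) ^ k) ^ j := by
        calc (𝔇 * W) ^ (j + 1) * (B * W) ^ k
            = (𝔇 * W) * ((𝔇 * W) ^ j * (B * W) ^ k) := by
              rw [pow_succ']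
              simp only [Matrix.mul_assoc]
          _ = (𝔇 * W) * ((B * W) ^ k * (B * W + C * (B * W) ^ k) ^ j) := by rw [hNSj j]
          _ = (𝔇 * W * (B * W) ^ k) * (B * W + C * (B * W) ^ k) ^ j := by
              simp only [Matrix.mul_assoc]
      have h2' : X * W * (𝔇 * W * (B * W) ^ k) = (1 + X * W * E * W) * (B * W) ^ k := by
        calc X * W * (𝔇 * W * (B * W) ^ k) = (X * W * (𝔇 * W)) * (B * W) ^ k := by
              simp only [Matrix.mul_assoc]
          _ = ((1 + X * W * E * W) * (X * W * (B * W))) * (B * W) ^ k := by rw [hXWDW]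
          _ = (1 + X * W * E * W) * (X * W * (B * W) * (B * W) ^ k) := by
              simp only [Matrix.mul_assoc]
          _ = (1 + X * W * E * W) * (B * W) ^ k := by rw [hPA]
      have crux : ((1 + X * W * E * W)⁻¹ * (X * W)) * ((𝔇 * W) ^ (j + 1) * (B * W) ^ k)
          = (𝔇 * W) ^ j * (B * W) ^ k := by
        calc ((1 + X * W * E * W)⁻¹ * (X * W)) * ((𝔇 * W) ^ (j + 1) * (B * W) ^ k)
            = (1 + X * W * E * W)⁻¹ * ((X * W * (𝔇 * W * (B * W) ^ k))
              * (B * W + C * (B * W) ^ k) ^ j) := by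
              rw [h1']
              simp only [Matrix.mul_assoc]
          _ = (1 + X * W * E * W)⁻¹ * (((1 + X * W * E * W) * (B * W) ^ k)
              * (B * W + C * (B * W) ^ k) ^ j) := by rw [h2']
          _ = ((1 + X * W * E * W)⁻¹ * (1 + X * W * E * W))
              * ((B * W) ^ k * (B * W + C * (B * W) ^ k) ^ j) := by
              simp only [Matrix.mul_assoc]
          _ = (B * W) ^ k * (B * W + C * (B * W) ^ k) ^ j := by rw [hVV', Matrix.one_mul]
          _ = (𝔇 * W) ^ j * (B * W) ^ k := (hNSj j).symm
      calc ((1 + X * W * E * W)⁻¹ * (X * W)) ^ (j + 1) * ((𝔇 * W) ^ (j + 1) * (B * W) ^ k)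
          = ((1 + X * W * E * W)⁻¹ * (X * W)) ^ j
            * (((1 + X * W * E * W)⁻¹ * (X * W)) * ((𝔇 * W) ^ (j + 1) * (B * W) ^ k)) := by
            rw [pow_succ]
            simp only [Matrix.mul_assoc]
        _ = ((1 + X * W * E * W)⁻¹ * (X * W)) ^ j * ((𝔇 * W) ^ j * (B * W) ^ k) := by rw [crux]
        _ = (B * W) ^ k := ih
  have r_ge : ((B * W) ^ k).rank ≤ ((𝔇 * W) ^ k).rank := by
    calc ((B * W) ^ k).rank
        = (((1 + X * W * E * W)⁻¹ * (X * W)) ^ k * ((𝔇 * W) ^ k * (B * W) ^ k)).rank := by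
          rw [key2 k]
      _ ≤ ((𝔇 * W) ^ k * (B * W) ^ k).rank := Matrix.rank_mul_le_right _ _
      _ ≤ ((𝔇 * W) ^ k).rank := Matrix.rank_mul_le_left _ _
  have c2 : (X * (1 + W * E * W * X)⁻¹).rank = ((𝔇 * W) ^ k).rank := by
    calc (X * (1 + W * E * W * X)⁻¹).rank = X.rank :=
          Matrix.rank_mul_eq_left_of_isUnit_det _ _ hUidet
      _ = ((B * W) ^ k).rank := hX2
      _ = ((𝔇 * W) ^ k).rank := le_antisymm r_ge r_le
  exact ⟨c1, c2, c3, c4⟩
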